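/- Let A, B as above and C = !![0, -I; I, 0], ψ = (1/√2) • ![1,1], ρ = |ψ⟩⟨ψ|. With superoperators 𝒜(ρ)={A,ρ}/2 etc., one has Tr(ρ·𝒜(𝒝(𝒞(1)))) = 1/2 and Tr(ρ·𝒝(𝒜(𝒞(1)))) = -1/2. -/
import Mathlib
open Complex Matrix

noncomputable def Aobs : Matrix (Fin 2) (Fin 2) ℂ :=
  !![0, Complex.exp (Complex.I * Real.pi / 4);
     Complex.exp (-(Complex.I * Real.pi / 4)), 0]

noncomputable def Bobs : Matrix (Fin 2) (Fin 2) ℂ :=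
  !![0, Complex.exp (-(Complex.I * Real.pi / 4));
     Complex.exp (Complex.I * Real.pi / 4), 0]

noncomputable def Cobs : Matrix (Fin 2) (Fin 2) ℂ := !![0, -Complex.I; Complex.I, 0]

noncomputable def ψ : Fin 2 → ℂ := (1 / (Real.sqrt 2 : ℂ)) • ![1, 1]

noncomputable def ρ0 : Matrix (Fin 2) (Fin 2) ℂ := Matrix.vecMulVec ψ (star ψ)

noncomputable def sop (M σ : Matrix (Fin 2) (Fin 2) ℂ) : Matrix (Fin 2) (Fin 2) ℂ :=
  (1 / 2 : ℂ) • (M * σ + σ * M)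

lemma exp_pi4 : Complex.exp (Complex.I * Real.pi / 4) = (Real.sqrt 2 / 2 : ℝ) * (1 + Complex.I) := by
  have : Complex.I * Real.pi / 4 = (Real.pi/4 : ℝ) * Complex.I := by push_cast; ring
  rw [this, Complex.exp_mul_I, ← Complex.ofReal_cos, ← Complex.ofReal_sin,
    Real.cos_pi_div_four, Real.sin_pi_div_four]
  push_cast; ring

lemma exp_neg_pi4 : Complex.exp (-(Complex.I * Real.pi / 4)) = (Real.sqrt 2 / 2 : ℝ) * (1 - Complex.I) := by
  have : -(Complex.I * Real.pi / 4) = (-(Real.pi/4) : ℝ) * Complex.I := by push_cast; ring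
  rw [this, Complex.exp_mul_I, ← Complex.ofReal_cos, ← Complex.ofReal_sin,
    Real.cos_neg, Real.sin_neg, Real.cos_pi_div_four, Real.sin_pi_div_four]
  push_cast; ring

theorem time_order_violation_values :
    (ρ0 * sop Aobs (sop Bobs (sop Cobs 1))).trace = 1 / 2 ∧
    (ρ0 * sop Bobs (sop Aobs (sop Cobs 1))).trace = -(1 / 2) := by
  have hs : ((Real.sqrt 2 : ℝ) : ℂ) * ((Real.sqrt 2 : ℝ) : ℂ) = 2 := by
    rw [← Complex.ofReal_mul, Real.mul_self_sqrt (by norm_num)]; norm_num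
  have hne : ((Real.sqrt 2 : ℝ) : ℂ) ≠ 0 := by
    simp [Real.sqrt_eq_zero']
  constructor <;>
  · simp only [sop, ρ0, ψ, Aobs, Bobs, Cobs, exp_pi4, exp_neg_pi4,
      Matrix.trace_fin_two, Matrix.mul_apply, Fin.sum_univ_two,
      Matrix.smul_apply, Matrix.add_apply, Matrix.vecMulVec_apply,
      Matrix.one_apply, Matrix.cons_val_zero, Matrix.cons_val_one, Matrix.head_cons,
      Matrix.head_fin_const, Pi.smul_apply, Pi.star_apply, smul_eq_mul,
      Matrix.cons_val', Matrix.empty_val', Matrix.cons_val_fin_one]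
    norm_num [Matrix.of_apply, Matrix.cons_val_zero, Matrix.cons_val_one, Matrix.head_cons,
      star_one, star_div₀, Complex.star_def]
    have hs2 : ((Real.sqrt 2 : ℝ) : ℂ)^2 = 2 := by rw [sq]; exact hs
    have hinv : (((Real.sqrt 2 : ℝ) : ℂ))⁻¹ = ((Real.sqrt 2 : ℝ) : ℂ) / 2 := by
      rw [inv_eq_one_div, div_eq_div_iff hne (by norm_num : (2:ℂ) ≠ 0)]
      rw [one_mul, ← hs]
    have h4 : ((Real.sqrt 2 : ℝ) : ℂ)^4 = 4 := by
      rw [show (4:ℕ) = 2*2 from rfl, pow_mul, hs2]; norm_num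
    rw [hinv]
    ring_nf
    simp only [Complex.I_sq, hs2]
    ring_nf
    rw [h4]
    norm_num
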